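/- Let X be a set, let n ≥ 1, let c : X → 𝔹ⁿ be any map into the open unit ball 𝔹ⁿ = {z ∈ ℂⁿ : ∑_{i=1}^n |z_i|² < 1}, and let β ≥ 0 be a real number. Then the kernel (x,y) ↦ (1 − ⟨c(x), c(y)⟩)^{−β} (principal branch of the complex power; note Re(1 − ⟨c(x),c(y)⟩) > 0) is positive semidefinite on X, where ⟨z,w⟩ = ∑_{i=1}^n z_i·conj(w_i). -/

import Mathlib

open Complex Metric ComplexConjugate
open scoped ComplexOrder

noncomputable section

set_option maxHeartbeats 1000000

/-- A kernel `K : X → X → ℂ` is positive semidefinite on a set `S`: for all finite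
families of points of `S` and scalars, the associated quadratic form is a
nonnegative real number (using the partial order on `ℂ`). -/
def IsPSDKernelOn {X : Type*} (K : X → X → ℂ) (S : Set X) : Prop :=
  ∀ (n : ℕ) (x : Fin n → X), (∀ i, x i ∈ S) → ∀ c : Fin n → ℂ,
    0 ≤ ∑ i, ∑ j, c i * conj (c j) * K (x i) (x j)

/-- The quadratic form of a Gram kernel is nonnegative. -/
lemma gram_qf_nonneg {N : ℕ} {ι : Type*} [Fintype ι] (v : Fin N → ι → ℂ) (w : Fin N → ℂ) :
    0 ≤ ∑ i, ∑ j, w i * conj (w j) * ∑ r, v i r * conj (v j r) := by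
  have key : ∑ i, ∑ j, w i * conj (w j) * ∑ r, v i r * conj (v j r)
      = ∑ r : ι, (∑ i, w i * v i r) * conj (∑ i, w i * v i r) := by
    have h1 : ∀ i j : Fin N, w i * conj (w j) * ∑ r, v i r * conj (v j r)
        = ∑ r, (w i * v i r) * conj (w j * v j r) := by
      intro i j
      rw [Finset.mul_sum]
      exact Finset.sum_congr rfl fun r _ => by rw [map_mul]; ring
    simp only [h1]
    have h2 : ∀ i : Fin N, ∑ j, ∑ r, (w i * v i r) * conj (w j * v j r)
        = ∑ r, ∑ j, (w i * v i r) * conj (w j * v j r) :=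
      fun i => Finset.sum_comm
    simp only [h2]
    rw [Finset.sum_comm]
    refine Finset.sum_congr rfl fun r _ => ?_
    rw [Finset.sum_mul, map_sum]
    exact Finset.sum_congr rfl fun i _ => by rw [Finset.mul_sum]
  rw [key]
  exact Finset.sum_nonneg fun r _ => by
    rw [Complex.mul_conj]
    exact Complex.zero_le_real.mpr (normSq_nonneg _)

/-- The quadratic form of an entrywise power of a Gram kernel is nonnegative. -/
lemma gram_pow_qf_nonneg {N : ℕ} {ι : Type*} [Fintype ι] (v : Fin N → ι → ℂ) (w : Fin N → ℂ)
    (k : ℕ) :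
    0 ≤ ∑ i, ∑ j, w i * conj (w j) * (∑ r, v i r * conj (v j r)) ^ k := by
  have h : ∀ i j : Fin N, (∑ r, v i r * conj (v j r)) ^ k
      = ∑ p : Fin k → ι, (∏ m, v i (p m)) * conj (∏ m, v j (p m)) := by
    intro i j
    rw [Fintype.sum_pow]
    exact Finset.sum_congr rfl fun p _ => by
      rw [Finset.prod_mul_distrib, map_prod]
  have key : ∑ i, ∑ j, w i * conj (w j) * (∑ r, v i r * conj (v j r)) ^ k
      = ∑ i, ∑ j, w i * conj (w j) * ∑ p : Fin k → ι, (∏ m, v i (p m)) * conj (∏ m, v j (p m)) :=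
    Finset.sum_congr rfl fun i _ => Finset.sum_congr rfl fun j _ => by rw [h]
  exact le_of_le_of_eq (gram_qf_nonneg (ι := Fin k → ι) (fun i p => ∏ m, v i (p m)) w) key.symm

/-- If a kernel is given by a power series in another kernel with nonnegative real
coefficients, and all entrywise powers of the latter have nonnegative quadratic form,
then so does the former. -/
lemma series_qf_nonneg {N : ℕ} (M K : Fin N → Fin N → ℂ) (a : ℕ → ℝ) (ha : ∀ k, 0 ≤ a k)
    (w : Fin N → ℂ)
    (hK : ∀ i j, HasSum (fun k => (a k : ℂ) * M i j ^ k) (K i j))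
    (hpow : ∀ k, 0 ≤ ∑ i, ∑ j, w i * conj (w j) * M i j ^ k) :
    0 ≤ ∑ i, ∑ j, w i * conj (w j) * K i j := by
  have h1 : ∀ i : Fin N, HasSum
      (fun k => ∑ j, w i * conj (w j) * ((a k : ℂ) * M i j ^ k))
      (∑ j, w i * conj (w j) * K i j) := by
    intro i
    have : ∀ j ∈ Finset.univ, HasSum (fun k => w i * conj (w j) * ((a k : ℂ) * M i j ^ k))
        (w i * conj (w j) * K i j) := fun j _ => (hK i j).mul_left _
    simpa using hasSum_sum this
  have h2 : HasSum (fun k => ∑ i, ∑ j, w i * conj (w j) * ((a k : ℂ) * M i j ^ k))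
      (∑ i, ∑ j, w i * conj (w j) * K i j) := by
    simpa using hasSum_sum (fun i (_ : i ∈ Finset.univ) => h1 i)
  refine hasSum_le (fun k => ?_) hasSum_zero h2
  have h3 : ∑ i, ∑ j, w i * conj (w j) * ((a k : ℂ) * M i j ^ k)
      = (a k : ℂ) * ∑ i, ∑ j, w i * conj (w j) * M i j ^ k := by
    rw [Finset.mul_sum]
    refine Finset.sum_congr rfl fun i _ => ?_
    rw [Finset.mul_sum]
    exact Finset.sum_congr rfl fun j _ => by ring
  rw [h3]
  exact mul_nonneg (Complex.zero_le_real.mpr (ha k)) (hpow k)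

/-- For any map `c` of a set `X` into the open unit ball of `ℂⁿ` and any real
`β ≥ 0`, the kernel `(1 − ⟨c(x), c(y)⟩)^{−β}` (principal branch) is positive
semidefinite on `X`; here `⟨z,w⟩ = ∑ zᵢ·conj(wᵢ)`. -/
theorem ball_power_kernel_psd
    {X : Type*} (n : ℕ) (hn : 1 ≤ n)
    (c : X → EuclideanSpace ℂ (Fin n))
    (hc : ∀ x, c x ∈ ball (0 : EuclideanSpace ℂ (Fin n)) 1)
    (β : ℝ) (hβ : 0 ≤ β) :
    IsPSDKernelOn
      (fun x y => (1 - ∑ i, c x i * conj (c y i)) ^ (-(β : ℂ)))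
      (Set.univ : Set X) := by
  intro N xs _ w
  set z : Fin N → EuclideanSpace ℂ (Fin n) := fun i => c (xs i) with hz
  set t : Fin N → Fin N → ℂ := fun i j => ∑ m, z i m * conj (z j m) with ht
  -- norms
  have hznorm : ∀ i, ‖z i‖ < 1 := by
    intro i
    have := hc (xs i)
    rwa [mem_ball_zero_iff] at this
  have htnorm : ∀ i j, ‖t i j‖ < 1 := by
    intro i j
    have hinner : t i j = inner ℂ (z j) (z i) := by
      rw [PiLp.inner_apply]
      exact (Finset.sum_congr rfl fun m _ => by rw [RCLike.inner_apply]).symm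
    rw [hinner]
    calc ‖(inner ℂ (z j) (z i) : ℂ)‖ ≤ ‖z j‖ * ‖z i‖ := norm_inner_le_norm _ _
      _ < 1 := by
          nlinarith [hznorm i, hznorm j, norm_nonneg (z i), norm_nonneg (z j)]
  have htre : ∀ i j, 0 < (1 - t i j).re := by
    intro i j
    have h1 := (abs_lt.mp (lt_of_le_of_lt (Complex.abs_re_le_norm (t i j)) (htnorm i j))).2
    simp only [Complex.sub_re, Complex.one_re]
    linarith
  have htne : ∀ i j, (1 : ℂ) - t i j ≠ 0 := by
    intro i j h
    have := htre i j
    rw [h] at this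
    simp at this
  have harg : ∀ i j, (1 - t i j).arg ≠ Real.pi := by
    intro i j h
    rw [Complex.arg_eq_pi_iff] at h
    linarith [htre i j, h.1]
  -- the log kernel
  set L : Fin N → Fin N → ℂ := fun i j => -Complex.log (1 - t i j) with hL
  -- conj symmetry of t and L
  have htconj : ∀ i j, conj (t i j) = t j i := by
    intro i j
    rw [ht]
    simp only [map_sum, map_mul, Complex.conj_conj]
    exact Finset.sum_congr rfl fun m _ => by ring
  have hLconj : ∀ i j, conj (L i j) = L j i := by
    intro i j
    rw [hL]
    simp only [map_neg]
    congr 1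
    rw [← Complex.log_conj _ (harg i j), map_sub, map_one, htconj]
  -- powers of t have nonneg quadratic forms for every weight vector
  have htpow : ∀ (w' : Fin N → ℂ) (k : ℕ), 0 ≤ ∑ i, ∑ j, w' i * conj (w' j) * t i j ^ k :=
    fun w' k => gram_pow_qf_nonneg (fun i m => z i m) w' k
  -- L has nonneg quadratic form for every weight vector
  have hLhasSum : ∀ i j, HasSum (fun k : ℕ => (((k : ℝ)⁻¹ : ℝ) : ℂ) * t i j ^ k) (L i j) := by
    intro i j
    have := hasSum_taylorSeries_neg_log (z := t i j) (htnorm i j)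
    convert this using 2 with k
    push_cast
    rw [div_eq_mul_inv]
    ring
  have hLqf : ∀ w' : Fin N → ℂ, 0 ≤ ∑ i, ∑ j, w' i * conj (w' j) * L i j := by
    intro w'
    exact series_qf_nonneg t L (fun k => (k : ℝ)⁻¹) (fun k => by positivity) w'
      hLhasSum (htpow w')
  -- Gram factorization of L via positive semidefiniteness
  have hLpsd : Matrix.PosSemidef (Matrix.of L) := by
    refine Matrix.PosSemidef.of_dotProduct_mulVec_nonneg ?_ ?_
    · ext i j
      rw [Matrix.conjTranspose_apply]
      simpa using hLconj j i
    · intro x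
      have := hLqf (fun i => conj (x i))
      calc (0 : ℂ) ≤ ∑ i, ∑ j, conj (x i) * conj (conj (x j)) * L i j := this
        _ = ∑ i, star x i * ∑ j, Matrix.of L i j * x j := by
            refine Finset.sum_congr rfl fun i _ => ?_
            rw [Finset.mul_sum]
            refine Finset.sum_congr rfl fun j _ => ?_
            simp only [Pi.star_apply, RCLike.star_def, Matrix.of_apply, Complex.conj_conj]
            ring
        _ = dotProduct (star x) (Matrix.mulVec (Matrix.of L) x) := rfl
  obtain ⟨B, hB⟩ : ∃ B : Matrix (Fin N) (Fin N) ℂ, Matrix.of L = B.conjTranspose * B := by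
    open scoped MatrixOrder in
    exact CStarAlgebra.nonneg_iff_eq_star_mul_self.mp hLpsd.nonneg
  have hgram : ∀ i j, L i j = ∑ r, conj (B r i) * conj (conj (B r j)) := by
    intro i j
    have : Matrix.of L i j = (B.conjTranspose * B) i j := by rw [hB]
    rw [Matrix.mul_apply] at this
    simp only [Matrix.conjTranspose_apply, RCLike.star_def] at this
    calc L i j = ∑ r, conj (B r i) * B r j := this
      _ = ∑ r, conj (B r i) * conj (conj (B r j)) :=
          Finset.sum_congr rfl fun r _ => by rw [Complex.conj_conj]
  -- powers of L have nonneg quadratic form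
  have hLpow : ∀ k : ℕ, 0 ≤ ∑ i, ∑ j, w i * conj (w j) * L i j ^ k := by
    intro k
    have key : ∑ i, ∑ j, w i * conj (w j) * L i j ^ k
        = ∑ i, ∑ j, w i * conj (w j) * (∑ r, conj (B r i) * conj (conj (B r j))) ^ k :=
      Finset.sum_congr rfl fun i _ => Finset.sum_congr rfl fun j _ => by rw [hgram]
    rw [key]
    exact gram_pow_qf_nonneg (fun i r => conj (B r i)) w k
  -- the kernel as exp(β L)
  have hker : ∀ i j, (1 - t i j) ^ (-(β : ℂ)) = Complex.exp ((β : ℂ) * L i j) := by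
    intro i j
    rw [Complex.cpow_def_of_ne_zero (htne i j)]
    congr 1
    rw [hL]
    ring
  have hexp : ∀ i j, HasSum (fun k : ℕ => ((β ^ k / k.factorial : ℝ) : ℂ) * L i j ^ k)
      ((1 - t i j) ^ (-(β : ℂ))) := by
    intro i j
    rw [hker i j, Complex.exp_eq_exp_ℂ]
    have := NormedSpace.expSeries_div_hasSum_exp ((β : ℂ) * L i j)
    convert this using 2 with k
    all_goals try rfl
    push_cast
    rw [mul_pow]
    ring
  exact series_qf_nonneg L (fun i j => (1 - t i j) ^ (-(β : ℂ)))
    (fun k => β ^ k / k.factorial)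
    (fun k => div_nonneg (pow_nonneg hβ k) (Nat.cast_nonneg _)) w hexp hLpow
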